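/- For every i ≥ 2, the word a·x_i·b is a Lyndon word, i.e., it is primitive and lexicographically strictly smaller than each of its other conjugates. -/

import Mathlib

namespace BWT

/-- The two-letter ordered alphabet `{a, b}` with `a < b`, encoded as `Bool` with `a = false`. -/
abbrev Letter := Bool

/-- The letter `a`. -/
abbrev la : Letter := false

/-- The letter `b`. -/
abbrev lb : Letter := true

/-- A (binary) word. -/
abbrev Word := List Letter

/-- All conjugates (rotations) of a word, listed by rotation amount. -/
def rotations (w : Word) : List Word := (List.range w.length).map w.rotate

/-- A word is primitive if all of its `|w|` conjugates are distinct. -/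
def Primitive (w : Word) : Prop := (rotations w).Nodup

/-- The conjugates of `w`, sorted lexicographically. -/
def sortedRotations (w : Word) : List Word := (rotations w).insertionSort (· ≤ ·)

/-- The Burrows–Wheeler transform: last letters of the lexicographically sorted conjugates. -/
def bwt (w : Word) : Word := (sortedRotations w).map (fun u => u.getLastD la)

/-- Number of maximal equal-letter runs of a word. -/
def runs (w : Word) : ℕ := (w.destutter (· ≠ ·)).length

/-- `r(w)`: the number of runs of the BWT of `w`. -/
def rr (w : Word) : ℕ := runs (bwt w)

/-- The runs-ratio `ρ(w)`. -/
def rho (w : Word) : ℚ :=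
  max ((rr w : ℚ) / (rr w.reverse : ℚ)) ((rr w.reverse : ℚ) / (rr w : ℚ))

/-- `n`-th power (concatenation) of a word. -/
def wpow (w : Word) : ℕ → Word
  | 0 => []
  | n + 1 => w ++ wpow w n

/-- Standard words for the directive sequence `d`:
`s 0 = b`, `s 1 = a`, `s (i+2) = (s (i+1))^(d i) · s i`. -/
def std (d : ℕ → ℕ) : ℕ → Word
  | 0 => [lb]
  | 1 => [la]
  | n + 2 => wpow (std d (n + 1)) (d n) ++ std d n

/-- Fibonacci words: `s 0 = b`, `s 1 = a`, `s (i+2) = s (i+1) · s i`. -/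
def fw : ℕ → Word
  | 0 => [lb]
  | 1 => [la]
  | n + 2 => fw (n + 1) ++ fw n

/-- Fibonacci numbers with `F 0 = F 1 = 1`. -/
def fib : ℕ → ℕ
  | 0 => 1
  | 1 => 1
  | n + 2 => fib (n + 1) + fib n

/-- The word `x i`, i.e. the Fibonacci word of order `i` with its last two letters removed
(so that `s_{2k} = x_{2k}·ab` and `s_{2k+1} = x_{2k+1}·ba`). -/
def x (i : ℕ) : Word := (fw i).take ((fw i).length - 2)

/-- `u` is a circular factor of `w`: a prefix of some conjugate of `w`. -/
def CircFactor (u w : Word) : Prop := ∃ i < w.length, u <+: w.rotate i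

/-- A circular factor `u` is left-special in `w` if both `a·u` and `b·u` are circular factors. -/
def LeftSpecial (u w : Word) : Prop := CircFactor (la :: u) w ∧ CircFactor (lb :: u) w

/-- Number of occurrences of `u` as a circular factor of `w`. -/
def occ (u w : Word) : ℕ :=
  ((List.range w.length).filter (fun j => decide (u <+: w.rotate j))).length

end BWT

namespace BWT

/-- `w` is smaller than `v` with a strict letter difference (not merely a proper prefix). -/
def NLt (w v : Word) : Prop :=
  ∃ p c₁ c₂ t₁ t₂, c₁ < c₂ ∧ w = p ++ c₁ :: t₁ ∧ v = p ++ c₂ :: t₂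

/-- Strong Lyndon property. -/
def Lyn (w : Word) : Prop :=
  ∀ s t, w = s ++ t → s ≠ [] → t ≠ [] → NLt w t

lemma NLt_ext {x y : Word} (h : NLt x y) (z z' : Word) : NLt (x ++ z) (y ++ z') := by
  obtain ⟨p, c₁, c₂, t₁, t₂, hc, hx, hy⟩ := h
  exact ⟨p, c₁, c₂, t₁ ++ z, t₂ ++ z', hc, by simp [hx], by simp [hy]⟩

lemma NLt_prepend {x y : Word} (p : Word) (h : NLt x y) : NLt (p ++ x) (p ++ y) := by
  obtain ⟨q, c₁, c₂, t₁, t₂, hc, hx, hy⟩ := h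
  exact ⟨p ++ q, c₁, c₂, t₁, t₂, hc, by simp [hx], by simp [hy]⟩

lemma NLt_irrefl {w : Word} (h : NLt w w) : False := by
  obtain ⟨p, c₁, c₂, t₁, t₂, hc, h1, h2⟩ := h
  rw [h1] at h2
  have := List.append_cancel_left h2
  simp at this
  simp [this.1] at hc

lemma NLt_trans {x y z : Word} (h₁ : NLt x y) (h₂ : NLt y z) : NLt x z := by
  obtain ⟨p, c₁, c₂, t₁, t₂, hc, hx, hy⟩ := h₁
  obtain ⟨q, d₁, d₂, s₁, s₂, hd, hy', hz⟩ := h₂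
  rw [hy] at hy'
  rcases List.append_eq_append_iff.mp hy' with ⟨r, hq, hr⟩ | ⟨r, hp, hr⟩
  · cases r with
    | nil =>
      simp at hq hr
      exact ⟨p, c₁, d₂, t₁, s₂, lt_trans hc (hr.1 ▸ hd), hx, by rw [hz, hq]⟩
    | cons e r' =>
      simp at hr
      exact ⟨p, c₁, c₂, t₁, r' ++ d₂ :: s₂, hc, hx,
        by rw [hz, hq, hr.1]; simp⟩
  · cases r with
    | nil =>
      simp at hp hr
      exact ⟨p, c₁, d₂, t₁, s₂, lt_trans hc (hr.1 ▸ hd), hx, by rw [hz, hp]⟩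
    | cons e r' =>
      simp at hr
      exact ⟨q, d₁, d₂, r' ++ c₁ :: t₁, s₂, hd,
        by rw [hx, hp, hr.1]; simp, hz⟩

/-- Chen–Fox style composition. -/
lemma Lyn_comp {u v : Word} (hu : Lyn u) (hv : Lyn v) (huv : NLt (u ++ v) v) :
    Lyn (u ++ v) := by
  intro s t h hs ht
  rcases List.append_eq_append_iff.mp h with ⟨r, hs', hv'⟩ | ⟨r, hu', ht'⟩
  · cases r with
    | nil => simp at hv'; rwa [← hv']
    | cons e r' =>
      exact NLt_trans huv (hv (e :: r') t hv' (by simp) ht)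
  · cases r with
    | nil =>
      simp at hu' ht'
      rw [ht']
      exact huv
    | cons e r' =>
      have h1 : NLt u (e :: r') := hu s (e :: r') hu' hs (by simp)
      rw [ht']
      exact NLt_ext h1 v v

lemma Lyn_of_drop {w : Word}
    (h : ∀ j, 0 < j → j < w.length → NLt w (w.drop j)) : Lyn w := by
  intro s t hst hs ht
  have hj0 : 0 < s.length := List.length_pos_iff.mpr hs
  have hdrop : w.drop s.length = t := by rw [hst, List.drop_left]
  have hjlen : s.length < w.length := by
    rw [hst]
    simp [List.length_append]
    exact List.length_pos_iff.mpr ht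
  have := h s.length hj0 hjlen
  rwa [hdrop] at this

lemma fw_add_two (n : ℕ) : fw (n + 2) = fw (n + 1) ++ fw n := rfl

lemma fw_comm (n : ℕ) : ∃ z c d, fw (n + 1) ++ fw n = z ++ [c, d] ∧
    fw n ++ fw (n + 1) = z ++ [d, c] := by
  induction n with
  | zero => exact ⟨[], la, lb, rfl, rfl⟩
  | succ n ih =>
    obtain ⟨z, c, d, h1, h2⟩ := ih
    refine ⟨fw (n + 1) ++ z, d, c, ?_, ?_⟩
    · rw [fw_add_two, List.append_assoc, h2, ← List.append_assoc]
    · rw [fw_add_two, List.append_assoc, h1, ← List.append_assoc]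

lemma x_spec {n : ℕ} {y : Word} {c d : Letter} (h : fw n = y ++ [c, d]) : x n = y := by
  rw [x, h]
  simp

lemma fw_suffix (k : ℕ) : (∃ y, fw (2 * k + 2) = y ++ [la, lb]) ∧
    (∃ y, fw (2 * k + 3) = y ++ [lb, la]) := by
  induction k with
  | zero => exact ⟨⟨[], rfl⟩, ⟨[la], rfl⟩⟩
  | succ k ih =>
    obtain ⟨⟨y₁, h₁⟩, ⟨y₂, h₂⟩⟩ := ih
    have e1 : 2 * (k + 1) + 2 = (2 * k + 2) + 2 := by ring
    have e2 : 2 * (k + 1) + 3 = (2 * k + 3) + 2 := by ring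
    constructor
    · refine ⟨fw (2 * k + 3) ++ y₁, ?_⟩
      rw [e1, fw_add_two]
      show fw (2*k+3) ++ fw (2*k+2) = _
      rw [h₁, List.append_assoc]
    · refine ⟨fw ((2 * k + 2) + 2) ++ y₂, ?_⟩
      rw [e2, fw_add_two]
      show fw ((2*k+2)+2) ++ fw (2*k+3) = _
      rw [h₂, List.append_assoc]

lemma fw_even (k : ℕ) : fw (2 * k + 2) = x (2 * k + 2) ++ [la, lb] := by
  obtain ⟨y, h⟩ := (fw_suffix k).1
  rw [x_spec h, h]

lemma fw_odd (k : ℕ) : fw (2 * k + 3) = x (2 * k + 3) ++ [lb, la] := by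
  obtain ⟨y, h⟩ := (fw_suffix k).2
  rw [x_spec h, h]

lemma x_even_rec (k : ℕ) :
    x (2 * k + 4) = x (2 * k + 3) ++ [lb, la] ++ x (2 * k + 2) := by
  have h : fw (2 * k + 4) = fw (2 * k + 3) ++ fw (2 * k + 2) := fw_add_two (2 * k + 2)
  have h4 : fw (2 * k + 4) = x (2 * k + 4) ++ [la, lb] := by
    have := fw_even (k + 1)
    have e : 2 * (k + 1) + 2 = 2 * k + 4 := by ring
    rwa [e] at this
  rw [h4, fw_odd, fw_even] at h
  apply List.append_cancel_right (bs := [la, lb])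
  rw [h]; simp

lemma x_odd_rec (k : ℕ) :
    x (2 * k + 5) = x (2 * k + 3) ++ [lb, la] ++ x (2 * k + 4) := by
  obtain ⟨z, c, d, h1, h2⟩ := fw_comm (2 * k + 3)
  -- h1 : fw (2k+4) ++ fw (2k+3) = z ++ [c,d],  h2 : fw (2k+3) ++ fw (2k+4) = z ++ [d,c]
  have h5 : fw (2 * k + 5) = x (2 * k + 5) ++ [lb, la] := by
    have := fw_odd (k + 1)
    have e : 2 * (k + 1) + 3 = 2 * k + 5 := by ring
    rwa [e] at this
  have hfw5 : fw (2 * k + 5) = fw (2 * k + 4) ++ fw (2 * k + 3) := fw_add_two (2 * k + 3)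
  have hz : z = x (2 * k + 5) ∧ ([c, d] : Word) = [lb, la] := by
    apply List.append_inj'
    · rw [← h1, ← hfw5, h5]
    · rfl
  obtain ⟨hz1, hcd⟩ := hz
  have hc : c = lb := by injection hcd
  have hd : d = la := by
    have := hcd
    injection this with _ h'
    injection h'
  rw [hz1, hc, hd] at h2
  -- h2 : fw (2k+3) ++ fw (2k+4) = x (2k+5) ++ [la, lb]
  have h4 : fw (2 * k + 4) = x (2 * k + 4) ++ [la, lb] := by
    have := fw_even (k + 1)
    have e : 2 * (k + 1) + 2 = 2 * k + 4 := by ring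
    rwa [e] at this
  rw [fw_odd, h4] at h2
  apply List.append_cancel_right (bs := [la, lb])
  rw [← h2]; simp

/-- The candidate Lyndon word. -/
def wrd (i : ℕ) : Word := la :: (x i ++ [lb])

lemma wrd_even_rec (k : ℕ) : wrd (2 * k + 4) = wrd (2 * k + 3) ++ wrd (2 * k + 2) := by
  simp only [wrd, x_even_rec]
  simp

lemma wrd_odd_rec (k : ℕ) : wrd (2 * k + 5) = wrd (2 * k + 3) ++ wrd (2 * k + 4) := by
  simp only [wrd, x_odd_rec]
  simp

lemma wrd_two : wrd 2 = [la, lb] := rfl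
lemma wrd_three : wrd 3 = [la, la, lb] := rfl

lemma lyn_two : Lyn (wrd 2) := by
  apply Lyn_of_drop
  intro j h0 h1
  rw [wrd_two] at h1 ⊢
  simp at h1
  interval_cases j
  exact ⟨[], la, lb, [lb], [], by decide, rfl, rfl⟩

lemma lyn_three : Lyn (wrd 3) := by
  apply Lyn_of_drop
  intro j h0 h1
  rw [wrd_three] at h1 ⊢
  simp at h1
  interval_cases j
  · exact ⟨[la], la, lb, [lb], [], by decide, rfl, rfl⟩
  · exact ⟨[], la, lb, [la, lb], [], by decide, rfl, rfl⟩

lemma nlt_three_two : NLt (wrd 3) (wrd 2) :=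
  ⟨[la], la, lb, [lb], [], by decide, rfl, rfl⟩

lemma main (k : ℕ) : Lyn (wrd (2 * k + 2)) ∧ Lyn (wrd (2 * k + 3)) ∧
    NLt (wrd (2 * k + 3)) (wrd (2 * k + 2)) := by
  induction k with
  | zero => exact ⟨lyn_two, lyn_three, nlt_three_two⟩
  | succ k ih =>
    obtain ⟨he, ho, hne⟩ := ih
    have key : NLt (wrd (2 * k + 3) ++ wrd (2 * k + 2)) (wrd (2 * k + 2)) := by
      have := NLt_ext hne (wrd (2 * k + 2)) []
      simpa using this
    have h4 : Lyn (wrd (2 * k + 4)) := by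
      rw [wrd_even_rec]
      exact Lyn_comp ho he key
    have key2 : NLt (wrd (2 * k + 5)) (wrd (2 * k + 4)) := by
      rw [wrd_odd_rec, wrd_even_rec]
      exact NLt_prepend _ key
    have key2' := key2
    rw [wrd_odd_rec] at key2'
    have h5 : Lyn (wrd (2 * k + 5)) := by
      rw [wrd_odd_rec]
      exact Lyn_comp ho h4 key2'
    have e1 : 2 * (k + 1) + 2 = 2 * k + 4 := by ring
    have e2 : 2 * (k + 1) + 3 = 2 * k + 5 := by ring
    rw [e1, e2]
    exact ⟨h4, h5, key2⟩

lemma rot_nlt {w : Word} (hw : Lyn w) (j : ℕ) (h0 : 0 < j) (hn : j < w.length) :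
    NLt w (w.rotate j) := by
  rw [List.rotate_eq_drop_append_take hn.le]
  have hwne : w ≠ [] := by intro h; rw [h] at hn; simp at hn
  have htake : w.take j ≠ [] := by
    rw [Ne, List.take_eq_nil_iff]
    push_neg
    exact ⟨by omega, hwne⟩
  have hdrop : w.drop j ≠ [] := by
    rw [Ne, List.drop_eq_nil_iff]
    omega
  have h := hw (w.take j) (w.drop j) (List.take_append_drop j w).symm htake hdrop
  have := NLt_ext h [] (w.take j)
  simpa using this

lemma NLt_lex {w v : Word} (h : NLt w v) : List.Lex (· < ·) w v := by
  obtain ⟨p, c₁, c₂, t₁, t₂, hc, h1, h2⟩ := h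
  subst h1; subst h2
  induction p with
  | nil => exact List.Lex.rel hc
  | cons a p ih => exact List.Lex.cons ih

lemma lyn_primitive {w : Word} (hw : Lyn w) : Primitive w := by
  rw [Primitive, rotations]
  apply List.Nodup.map_on _ List.nodup_range
  intro a ha b hb hab
  rw [List.mem_range] at ha hb
  have key : ∀ p q, p < q → q < w.length → w.rotate p = w.rotate q → False := by
    intro p q hpq hql heq
    have h1 : w.rotate (p + (w.length - q)) = w := by
      have := congrArg (fun l => l.rotate (w.length - q)) heq
      simp only [List.rotate_rotate] at this
      rw [this]
      have e : q + (w.length - q) = w.length := by omega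
      rw [e, List.rotate_length]
    have h2 : NLt w (w.rotate (p + (w.length - q))) :=
      rot_nlt hw _ (by omega) (by omega)
    rw [h1] at h2
    exact NLt_irrefl h2
  rcases Nat.lt_trichotomy a b with h | h | h
  · exact (key a b h hb hab).elim
  · exact h
  · exact (key b a h ha hab.symm).elim

lemma lyn_wrd {i : ℕ} (hi : 2 ≤ i) : Lyn (wrd i) := by
  rcases Nat.even_or_odd i with ⟨m, hm⟩ | ⟨m, hm⟩
  · have : i = 2 * (m - 1) + 2 := by omega
    rw [this]
    exact (main (m - 1)).1
  · have : i = 2 * (m - 1) + 3 := by omega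
    rw [this]
    exact (main (m - 1)).2.1

end BWT

open BWT in
/-- for every `i ≥ 2`, the word `a·x_i·b` is a Lyndon word: it is primitive and
lexicographically strictly smaller than each of its other conjugates. -/
theorem stmt2 (i : ℕ) (hi : 2 ≤ i) :
    Primitive (la :: (x i ++ [lb])) ∧
    ∀ j, 0 < j → j < (la :: (x i ++ [lb])).length →
      (la :: (x i ++ [lb])) < (la :: (x i ++ [lb])).rotate j := by
  have hw : Lyn (wrd i) := lyn_wrd hi
  constructor
  · exact lyn_primitive hw
  · intro j h0 h1
    exact NLt_lex (rot_nlt hw j h0 h1)
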